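/- Let s be any real-valued function on natural bundles, and for a natural bundle b let T(b) denote the maximum of ∑_{c ∈ P} s(c) over all tree partitions P of b (this maximum exists: the set of tree partitions of b is finite and nonempty). Then T satisfies the recurrence: if b has no hidden attribute, T(b) = s(b); otherwise T(b) = max( s(b), max over attributes x with b x = none of ∑_{j : Fin (C x)} T(Function.update b x (some j)) ). -/

import Mathlib

/-- A natural bundle: each attribute either takes a specific value (`some a`) or is
hidden (`none`). -/
abbrev Bundle (k : ℕ) (C : Fin k → ℕ) := ∀ i : Fin k, Option (Fin (C i))

/-- `splitB b x` : the bundles obtained from `b` by revealing the hidden attribute `x`. -/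
def splitB {k : ℕ} {C : Fin k → ℕ} (b : Bundle k C) (x : Fin k) : Finset (Bundle k C) :=
  Finset.univ.image fun j : Fin (C x) => Function.update b x (some j)

/-- Tree partitions of a natural bundle `b`: obtained from `{b}` by recursively
splitting a bundle along one of its hidden attributes. -/
inductive IsTreePartition (k : ℕ) (C : Fin k → ℕ) (b : Bundle k C) :
    Finset (Bundle k C) → Prop
  | base : IsTreePartition k C b {b}
  | step (P : Finset (Bundle k C)) (c : Bundle k C) (x : Fin k) :
      IsTreePartition k C b P → c ∈ P → c x = none →
      IsTreePartition k C b ((P.erase c) ∪ splitB c x)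

namespace TPaux

variable {k : ℕ} {C : Fin k → ℕ}

lemma mem_splitB {b d : Bundle k C} {x : Fin k} :
    d ∈ splitB b x ↔ ∃ j : Fin (C x), d = Function.update b x (some j) := by
  simp [splitB, eq_comm]

lemma tp_extends {b : Bundle k C} {P : Finset (Bundle k C)}
    (h : IsTreePartition k C b P) :
    ∀ c ∈ P, ∀ i, b i ≠ none → c i = b i := by
  induction h with
  | base =>
      intro c hc i _
      rw [Finset.mem_singleton] at hc; subst hc; rfl
  | step P c x hP hc hcx ih =>
      intro d hd i hi
      rcases Finset.mem_union.1 hd with h1 | h2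
      · exact ih d (Finset.mem_of_mem_erase h1) i hi
      · rcases mem_splitB.1 h2 with ⟨j, rfl⟩
        have hix : i ≠ x := by
          rintro rfl
          exact hi ((ih c hc i hi).symm.trans hcx ▸ rfl)
        rw [Function.update_of_ne hix]
        exact ih c hc i hi

lemma tp_mem_x {b d : Bundle k C} {x : Fin k} {j : Fin (C x)} {P : Finset (Bundle k C)}
    (h : IsTreePartition k C (Function.update b x (some j)) P) (hd : d ∈ P) :
    d x = some j := by
  have := tp_extends h d hd x (by simp)
  simpa using this

lemma tp_incompat {b : Bundle k C} {P : Finset (Bundle k C)}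
    (h : IsTreePartition k C b P) :
    ∀ c ∈ P, ∀ d ∈ P, c ≠ d → ∃ i, c i ≠ none ∧ d i ≠ none ∧ c i ≠ d i := by
  induction h with
  | base =>
      intro c hc d hd hne
      rw [Finset.mem_singleton] at hc hd
      exact absurd (hc.trans hd.symm) hne
  | step P c x hP hc hcx ih =>
      intro a ha e he hne
      rcases Finset.mem_union.1 ha with ha | ha <;> rcases Finset.mem_union.1 he with he | he
      · exact ih a (Finset.mem_of_mem_erase ha) e (Finset.mem_of_mem_erase he) hne
      · rcases mem_splitB.1 he with ⟨j, rfl⟩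
        obtain ⟨i, hci, hai, hcai⟩ :=
          ih c hc a (Finset.mem_of_mem_erase ha) (Ne.symm (Finset.mem_erase.1 ha).1)
        have hix : i ≠ x := fun h => hci (h ▸ hcx)
        exact ⟨i, hai, by rw [Function.update_of_ne hix]; exact hci,
          by rw [Function.update_of_ne hix]; exact fun h => hcai h.symm⟩
      · rcases mem_splitB.1 ha with ⟨j, rfl⟩
        obtain ⟨i, hci, hei, hcei⟩ :=
          ih c hc e (Finset.mem_of_mem_erase he) (Ne.symm (Finset.mem_erase.1 he).1)
        have hix : i ≠ x := fun h => hci (h ▸ hcx)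
        exact ⟨i, by rw [Function.update_of_ne hix]; exact hci, hei,
          by rw [Function.update_of_ne hix]; exact hcei⟩
      · rcases mem_splitB.1 ha with ⟨j1, rfl⟩
        rcases mem_splitB.1 he with ⟨j2, rfl⟩
        have hj : j1 ≠ j2 := by rintro rfl; exact hne rfl
        exact ⟨x, by simp, by simp, by simp [hj]⟩

lemma tp_glue {b c : Bundle k C} {P Q : Finset (Bundle k C)}
    (hP : IsTreePartition k C b P) (hc : c ∈ P) (hQ : IsTreePartition k C c Q) :
    IsTreePartition k C b ((P.erase c) ∪ Q) := by
  induction hQ with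
  | base =>
      have : P.erase c ∪ {c} = P := by
        ext e
        simp only [Finset.mem_union, Finset.mem_erase, Finset.mem_singleton]
        constructor
        · rintro (⟨_, h⟩ | rfl) <;> [exact h; exact hc]
        · intro h; by_cases he : e = c
          · exact Or.inr he
          · exact Or.inl ⟨he, h⟩
      rw [this]; exact hP
  | step Q' d y hQ' hd hdy ih =>
      have hd_ext : ∀ i, c i ≠ none → d i = c i := fun i hi => tp_extends hQ' d hd i hi
      have hdP : d ∉ P.erase c := by
        intro hmem
        obtain ⟨i, hci, _, hcd⟩ :=
          tp_incompat hP c hc d (Finset.mem_of_mem_erase hmem)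
            (Ne.symm (Finset.mem_erase.1 hmem).1)
        exact hcd (hd_ext i hci).symm
      have hstep := IsTreePartition.step _ d y ih (Finset.mem_union_right _ hd) hdy
      have heq : ((P.erase c ∪ Q').erase d) ∪ splitB d y
          = (P.erase c) ∪ ((Q'.erase d) ∪ splitB d y) := by
        ext e
        have hed : e ≠ c ∧ e ∈ P → e ≠ d := fun h1 h2 => hdP (h2 ▸ Finset.mem_erase.2 h1)
        simp only [Finset.mem_union, Finset.mem_erase]
        constructor
        · rintro (⟨hne, h | h⟩ | h)
          · exact Or.inl h
          · exact Or.inr (Or.inl ⟨hne, h⟩)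
          · exact Or.inr (Or.inr h)
        · rintro (h | ⟨hne, h⟩ | h)
          · exact Or.inl ⟨hed h, Or.inl h⟩
          · exact Or.inl ⟨hne, Or.inr h⟩
          · exact Or.inr h
      rw [heq] at hstep; exact hstep

lemma tp_disjoint {b : Bundle k C} {x : Fin k} {f : Fin (C x) → Finset (Bundle k C)}
    (hf : ∀ j, IsTreePartition k C (Function.update b x (some j)) (f j)) :
    (↑(Finset.univ : Finset (Fin (C x))) : Set (Fin (C x))).PairwiseDisjoint f := by
  intro i _ j _ hij
  rw [Function.onFun, Finset.disjoint_left]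
  intro d hdi hdj
  have h1 := tp_mem_x (hf i) hdi
  have h2 := tp_mem_x (hf j) hdj
  exact hij (Option.some_injective _ (h1.symm.trans h2))

lemma tp_glue_all {b : Bundle k C} {x : Fin k} (hx : b x = none)
    (f : Fin (C x) → Finset (Bundle k C))
    (hf : ∀ j, IsTreePartition k C (Function.update b x (some j)) (f j)) :
    IsTreePartition k C b (Finset.univ.biUnion f) := by
  classical
  have key : ∀ S : Finset (Fin (C x)),
      IsTreePartition k C b
        (((Finset.univ \ S).image fun j => Function.update b x (some j)) ∪ S.biUnion f) := by
    intro S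
    induction S using Finset.induction with
    | empty =>
        simp only [Finset.sdiff_empty, Finset.biUnion_empty, Finset.union_empty]
        have h0 := IsTreePartition.step {b} b x .base (Finset.mem_singleton_self b) hx
        simpa [splitB, Finset.erase_singleton] using h0
    | @insert j S hjS ih =>
        have hchild : Function.update b x (some j)
            ∈ ((Finset.univ \ S).image fun j => Function.update b x (some j)) ∪ S.biUnion f :=
          Finset.mem_union_left _ (Finset.mem_image_of_mem _ (by simp [hjS]))
        have hglue := tp_glue ih hchild (hf j)
        have heq : ((((Finset.univ \ S).image fun j => Function.update b x (some j))
              ∪ S.biUnion f).erase (Function.update b x (some j))) ∪ f j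
            = ((Finset.univ \ insert j S).image fun j => Function.update b x (some j))
              ∪ (insert j S).biUnion f := by
          have hchinj : ∀ i1 i2 : Fin (C x),
              Function.update b x (some i1) = Function.update b x (some i2) → i1 = i2 := by
            intro i1 i2 h
            have := congrFun h x
            simpa using this
          have hfx : ∀ i, ∀ d ∈ f i, d x = some i := fun i d hd => tp_mem_x (hf i) hd
          ext d
          simp only [Finset.mem_union, Finset.mem_erase, Finset.mem_image, Finset.mem_sdiff,
            Finset.mem_biUnion, Finset.mem_univ, true_and, Finset.mem_insert]
          constructor
          · rintro (⟨hne, ⟨i, hiS, rfl⟩ | ⟨i, hiS, hdi⟩⟩ | hdj)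
            · refine Or.inl ⟨i, ?_, rfl⟩
              rintro (rfl | h); exact hne rfl; exact hiS h
            · exact Or.inr ⟨i, Or.inr hiS, hdi⟩
            · exact Or.inr ⟨j, Or.inl rfl, hdj⟩
          · rintro (⟨i, hiS, rfl⟩ | ⟨i, (rfl | hiS), hdi⟩)
            · refine Or.inl ⟨fun h => hiS (Or.inl (hchinj _ _ h)), Or.inl ⟨i, fun h => hiS (Or.inr h), rfl⟩⟩
            · exact Or.inr hdi
            · refine Or.inl ⟨?_, Or.inr ⟨i, hiS, hdi⟩⟩
              intro h
              have h1 := hfx i d hdi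
              rw [h] at h1
              simp at h1
              -- h1 : j = i, but need i ≠ j? i ∈ S, j ∉ S
              exact hjS (h1 ▸ hiS)
        rw [heq] at hglue; exact hglue
  have := key Finset.univ
  simpa using this

lemma tp_of_no_none {b : Bundle k C} {P : Finset (Bundle k C)}
    (hb : ∀ x, b x ≠ none) (h : IsTreePartition k C b P) : P = {b} := by
  induction h with
  | base => rfl
  | step P c x hP hc hcx ih =>
      subst ih
      rw [Finset.mem_singleton] at hc
      exact absurd (hc ▸ hcx) (hb x)

lemma tp_decompose {b : Bundle k C} {P : Finset (Bundle k C)}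
    (h : IsTreePartition k C b P) :
    P = {b} ∨ ∃ x, b x = none ∧ ∃ f : Fin (C x) → Finset (Bundle k C),
      (∀ j, IsTreePartition k C (Function.update b x (some j)) (f j)) ∧
      P = Finset.univ.biUnion f := by
  classical
  induction h with
  | base => exact Or.inl rfl
  | step P c x hP hc hcx ih =>
      right
      rcases ih with rfl | ⟨y, hy, f, hf, rfl⟩
      · rw [Finset.mem_singleton] at hc; subst hc
        refine ⟨x, hcx, fun j => {Function.update c x (some j)}, fun j => .base, ?_⟩
        ext d
        simp [splitB, Finset.erase_singleton, eq_comm]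
      · obtain ⟨j0, _, hcj0⟩ := Finset.mem_biUnion.1 hc
        refine ⟨y, hy, Function.update f j0 (((f j0).erase c) ∪ splitB c x), fun j => ?_, ?_⟩
        · by_cases hj : j = j0
          · subst hj; rw [Function.update_self]
            exact IsTreePartition.step _ c x (hf j) hcj0 hcx
          · rw [Function.update_of_ne hj]; exact hf j
        · have hfx : ∀ i, ∀ d ∈ f i, d y = some i := fun i d hd => tp_mem_x (hf i) hd
          have hconly : ∀ i, i ≠ j0 → c ∉ f i := by
            intro i hi hmem
            have h1 := hfx i c hmem
            have h2 := hfx j0 c hcj0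
            exact hi (Option.some_injective _ (h1.symm.trans h2))
          ext d
          simp only [Finset.mem_union, Finset.mem_erase, Finset.mem_biUnion, Finset.mem_univ,
            true_and]
          constructor
          · rintro (⟨hne, i, hdi⟩ | hsp)
            · by_cases hi : i = j0
              · subst hi
                refine ⟨i, ?_⟩
                rw [Function.update_self]
                exact Finset.mem_union_left _ (Finset.mem_erase.2 ⟨hne, hdi⟩)
              · exact ⟨i, by rw [Function.update_of_ne hi]; exact hdi⟩
            · exact ⟨j0, by rw [Function.update_self]; exact Finset.mem_union_right _ hsp⟩
          · rintro ⟨i, hdi⟩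
            by_cases hi : i = j0
            · subst hi
              rw [Function.update_self] at hdi
              rcases Finset.mem_union.1 hdi with h | h
              · exact Or.inl ⟨(Finset.mem_erase.1 h).1, i, (Finset.mem_erase.1 h).2⟩
              · exact Or.inr h
            · rw [Function.update_of_ne hi] at hdi
              exact Or.inl ⟨fun h => hconly i hi (h ▸ hdi), i, hdi⟩

end TPaux

/-- For any `s`, the set of tree partitions of any bundle is finite and nonempty, so the
maximum `T b` of `∑_{c ∈ P} s c` over tree partitions `P` of `b` exists, and `T`
satisfies the recurrence `T b = s b` when `b` has no hidden attribute and
`T b = max (s b) (max_{x : b x = none} ∑_j T (update b x (some j)))` otherwise. -/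
theorem stmt11 (k : ℕ) (C : Fin k → ℕ) (hC : ∀ i, 1 ≤ C i) (s : Bundle k C → ℝ) :
    (∀ b : Bundle k C,
      {P | IsTreePartition k C b P}.Finite ∧ {P | IsTreePartition k C b P}.Nonempty) ∧
    ∃ T : Bundle k C → ℝ,
      (∀ b : Bundle k C,
        (∃ P, IsTreePartition k C b P ∧ ∑ c ∈ P, s c = T b) ∧
        (∀ P, IsTreePartition k C b P → ∑ c ∈ P, s c ≤ T b)) ∧
      (∀ b : Bundle k C, (∀ x, b x ≠ none) → T b = s b) ∧
      (∀ b : Bundle k C, ∀ h : ∃ x, b x = none,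
        T b = max (s b)
          ((Finset.univ.filter fun x => b x = none).sup'
            (by obtain ⟨x, hx⟩ := h
                exact ⟨x, Finset.mem_filter.2 ⟨Finset.mem_univ x, hx⟩⟩)
            (fun x => ∑ j : Fin (C x), T (Function.update b x (some j))))) := by
  classical
  refine ⟨fun b => ⟨Set.toFinite _, ⟨{b}, IsTreePartition.base⟩⟩, ?_⟩
  have hne : ∀ b : Bundle k C,
      (Finset.univ.filter fun P => IsTreePartition k C b P).Nonempty :=
    fun b => ⟨{b}, Finset.mem_filter.2 ⟨Finset.mem_univ _, IsTreePartition.base⟩⟩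
  set T : Bundle k C → ℝ := fun b =>
    (Finset.univ.filter fun P => IsTreePartition k C b P).sup' (hne b)
      (fun P => ∑ c ∈ P, s c) with hTdef
  have hmax : ∀ b : Bundle k C,
      (∃ P, IsTreePartition k C b P ∧ ∑ c ∈ P, s c = T b) ∧
      (∀ P, IsTreePartition k C b P → ∑ c ∈ P, s c ≤ T b) := by
    intro b
    constructor
    · obtain ⟨P, hP, hPe⟩ :=
        Finset.exists_mem_eq_sup' (H := hne b) (fun P => ∑ c ∈ P, s c)
      exact ⟨P, (Finset.mem_filter.1 hP).2, hPe.symm⟩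
    · intro P hP
      rw [hTdef]
      exact Finset.le_sup' (fun P => ∑ c ∈ P, s c)
        (Finset.mem_filter.2 ⟨Finset.mem_univ _, hP⟩)
  refine ⟨T, hmax, ?_, ?_⟩
  · intro b hb
    have hfil : (Finset.univ.filter fun P => IsTreePartition k C b P) = {({b} : Finset (Bundle k C))} := by
      ext P
      simp only [Finset.mem_filter, Finset.mem_univ, true_and, Finset.mem_singleton]
      exact ⟨fun h => TPaux.tp_of_no_none hb h, fun h => h ▸ IsTreePartition.base⟩
    rw [hTdef]
    simp only [hfil, Finset.sup'_singleton, Finset.sum_singleton]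
  · intro b hb
    apply le_antisymm
    · rw [hTdef]
      apply Finset.sup'_le
      intro P hP
      have hTP := (Finset.mem_filter.1 hP).2
      rcases TPaux.tp_decompose hTP with rfl | ⟨x, hx, f, hf, rfl⟩
      · rw [Finset.sum_singleton]; exact le_max_left _ _
      · rw [Finset.sum_biUnion (TPaux.tp_disjoint hf)]
        refine le_trans (le_trans ?_
          (Finset.le_sup' (fun x => ∑ j : Fin (C x), T (Function.update b x (some j)))
            (Finset.mem_filter.2 ⟨Finset.mem_univ x, hx⟩))) (le_max_right _ _)
        exact Finset.sum_le_sum fun j _ => (hmax _).2 (f j) (hf j)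
    · apply max_le
      · have := (hmax b).2 {b} IsTreePartition.base
        simpa using this
      · apply Finset.sup'_le
        intro x hx
        have hxnone : b x = none := (Finset.mem_filter.1 hx).2
        have hch : ∀ j : Fin (C x), ∃ P,
            IsTreePartition k C (Function.update b x (some j)) P ∧
            ∑ c ∈ P, s c = T (Function.update b x (some j)) :=
          fun j => (hmax _).1
        choose g hg hkey using hch
        have hQ := TPaux.tp_glue_all hxnone g hg
        have hle := (hmax b).2 _ hQ
        rw [Finset.sum_biUnion (TPaux.tp_disjoint hg)] at hle
        calc ∑ j : Fin (C x), T (Function.update b x (some j))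
            = ∑ j : Fin (C x), ∑ c ∈ g j, s c := by
              exact Finset.sum_congr rfl fun j _ => (hkey j).symm
          _ ≤ T b := hle
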